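/- Let V be a nonempty subset of ℝ^n and suppose f is a tropical rational function such that (1) { x ∈ ℝ^n | f(x) = 0 } equals the closure of V, and (2) there exists k' ∈ ℤ>0 with k'·f(x) ≥ dist(x, closure(V)) for all x. Then for any tropical rational function g with g ≥ 0 and g vanishing on closure(V), there exists N' ∈ ℤ>0 with N'·f ≥ g pointwise, and the congruence E(closure(V)) of all pairs agreeing on closure(V) equals ⟨(f, 0)⟩. -/
import Mathlib

/-- A tropical (max-plus) polynomial function on `ℝ^n` (Euclidean space). -/
def IsTropPoly (n : ℕ) (f : EuclideanSpace ℝ (Fin n) → ℝ) : Prop :=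
  ∃ (A : Finset (Fin n → ℕ)) (hA : A.Nonempty) (a : (Fin n → ℕ) → ℝ),
    ∀ x, f x = A.sup' hA fun i => a i + ∑ j, (i j : ℝ) * x j

/-- A tropical rational function is a difference of two tropical polynomial functions. -/
def IsTropRat (n : ℕ) (f : EuclideanSpace ℝ (Fin n) → ℝ) : Prop :=
  ∃ f₁ f₂, IsTropPoly n f₁ ∧ IsTropPoly n f₂ ∧ ∀ x, f x = f₁ x - f₂ x

/-- The nonzero (≠ -∞) elements of the tropical rational function semifield. -/
abbrev TRF (n : ℕ) := { f : EuclideanSpace ℝ (Fin n) → ℝ // IsTropRat n f }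

/-- The tropical rational function semifield: tropical rational functions with `⊥ = -∞`. -/
abbrev TR (n : ℕ) := WithBot (TRF n)

/-- Evaluation of an element of the semifield at a point, with values in `ℝ ∪ {-∞}`. -/
def evalTR {n : ℕ} (a : TR n) (x : EuclideanSpace ℝ (Fin n)) : WithBot ℝ :=
  WithBot.map (fun f => f.1 x) a

/-- `add` realizes tropical addition `⊕` (pointwise max, with `-∞` neutral). -/
def AddLaw (n : ℕ) (add : TR n → TR n → TR n) : Prop :=
  (∀ f g : TRF n, ∃ h : TRF n, add ↑f ↑g = ↑h ∧ ∀ x, h.1 x = max (f.1 x) (g.1 x)) ∧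
  (∀ a, add a ⊥ = a) ∧ (∀ a, add ⊥ a = a)

/-- `mul` realizes tropical multiplication `⊙` (pointwise sum, with `-∞` absorbing). -/
def MulLaw (n : ℕ) (mul : TR n → TR n → TR n) : Prop :=
  (∀ f g : TRF n, ∃ h : TRF n, mul ↑f ↑g = ↑h ∧ ∀ x, h.1 x = f.1 x + g.1 x) ∧
  (∀ a, mul a ⊥ = ⊥) ∧ (∀ a, mul ⊥ a = ⊥)

/-- A congruence: an equivalence relation compatible with both operations. -/
def IsCongruence {α : Type*} (add mul : α → α → α) (E : α → α → Prop) : Prop :=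
  (∀ a, E a a) ∧ (∀ a b, E a b → E b a) ∧ (∀ a b c, E a b → E b c → E a c) ∧
  (∀ a b c d, E a b → E c d → E (add a c) (add b d)) ∧
  (∀ a b c d, E a b → E c d → E (mul a c) (mul b d))

/-- The congruence generated by a relation `R`. -/
def conGenBy {α : Type*} (add mul : α → α → α) (R : α → α → Prop) : α → α → Prop :=
  fun a b => ∀ E : α → α → Prop, IsCongruence add mul E → (∀ x y, R x y → E x y) → E a b

lemma coord_dist {n : ℕ} (x y : EuclideanSpace ℝ (Fin n)) (j : Fin n) :
    |x j - y j| ≤ dist x y := by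
  rw [EuclideanSpace.dist_eq, ← Real.dist_eq]
  apply Real.le_sqrt_of_sq_le
  exact Finset.single_le_sum (fun i _ => sq_nonneg (dist (x i) (y i))) (Finset.mem_univ j)

lemma trop_poly_lip {n : ℕ} {f : EuclideanSpace ℝ (Fin n) → ℝ} (hf : IsTropPoly n f) :
    ∃ K : ℝ, 0 ≤ K ∧ ∀ x y, f x ≤ f y + K * dist x y := by
  obtain ⟨A, hA, a, h⟩ := hf
  refine ⟨A.sup' hA (fun i => ∑ j, (i j : ℝ)), ?_, ?_⟩
  · obtain ⟨i, hi⟩ := hA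
    exact le_trans (Finset.sum_nonneg fun j _ => Nat.cast_nonneg _)
      (Finset.le_sup' (fun i => ∑ j, (i j : ℝ)) hi)
  · intro x y
    rw [h x, h y]
    apply Finset.sup'_le
    intro i hi
    have h1 : a i + ∑ j, (i j : ℝ) * y j ≤ A.sup' hA fun i => a i + ∑ j, (i j : ℝ) * y j :=
      Finset.le_sup' (fun i => a i + ∑ j, (i j : ℝ) * y j) hi
    have h2 : (∑ j, (i j : ℝ)) ≤ A.sup' hA (fun i => ∑ j, (i j : ℝ)) :=
      Finset.le_sup' (fun i => ∑ j, (i j : ℝ)) hi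
    have h3 : ∑ j, (i j : ℝ) * x j - ∑ j, (i j : ℝ) * y j ≤ (∑ j, (i j : ℝ)) * dist x y := by
      rw [← Finset.sum_sub_distrib, Finset.sum_mul]
      apply Finset.sum_le_sum
      intro j _
      rw [← mul_sub]
      calc (i j : ℝ) * (x j - y j) ≤ (i j : ℝ) * |x j - y j| :=
            mul_le_mul_of_nonneg_left (le_abs_self _) (Nat.cast_nonneg _)
        _ ≤ (i j : ℝ) * dist x y :=
            mul_le_mul_of_nonneg_left (coord_dist x y j) (Nat.cast_nonneg _)
    have hd : (0:ℝ) ≤ dist x y := dist_nonneg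
    nlinarith [mul_le_mul_of_nonneg_right h2 hd]

lemma trop_rat_lip {n : ℕ} {f : EuclideanSpace ℝ (Fin n) → ℝ} (hf : IsTropRat n f) :
    ∃ K : ℝ, 0 ≤ K ∧ ∀ x y, f x ≤ f y + K * dist x y := by
  obtain ⟨f₁, f₂, h₁, h₂, heq⟩ := hf
  obtain ⟨K₁, hK₁0, hK₁⟩ := trop_poly_lip h₁
  obtain ⟨K₂, hK₂0, hK₂⟩ := trop_poly_lip h₂
  refine ⟨K₁ + K₂, by linarith, fun x y => ?_⟩
  have e1 := hK₁ x y
  have e2 := hK₂ y x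
  rw [heq x, heq y]
  rw [dist_comm y x] at e2
  linarith

lemma keybound {n : ℕ} (V : Set (EuclideanSpace ℝ (Fin n))) (hV : V.Nonempty)
    (fv : EuclideanSpace ℝ (Fin n) → ℝ)
    (k' : ℕ) (hk' : 0 < k') (hk : ∀ x, Metric.infDist x (closure V) ≤ (k' : ℝ) * fv x)
    (w : EuclideanSpace ℝ (Fin n) → ℝ) (K : ℝ) (hK : 0 ≤ K)
    (hlip : ∀ x y, w x ≤ w y + K * dist x y)
    (hw0 : ∀ x ∈ closure V, w x = 0) :
    ∃ N' : ℕ, 0 < N' ∧ ∀ x, w x ≤ (N' : ℝ) * fv x := by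
  have hVc : (closure V).Nonempty := hV.closure
  refine ⟨⌈K * k'⌉₊ + 1, Nat.succ_pos _, fun x => ?_⟩
  obtain ⟨y, hy, hyd⟩ := isClosed_closure.exists_infDist_eq_dist hVc x
  have hc : (0:ℝ) < k' := by exact_mod_cast hk'
  have hf0 : 0 ≤ fv x := by
    have h := (Metric.infDist_nonneg (x := x) (s := closure V)).trans (hk x)
    nlinarith
  have hwx : w x ≤ K * Metric.infDist x (closure V) := by
    calc w x ≤ w y + K * dist x y := hlip x y
      _ = K * Metric.infDist x (closure V) := by rw [hw0 y hy, hyd]; ring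
  have hKk : K * (k':ℝ) ≤ ((⌈K * k'⌉₊ + 1 : ℕ) : ℝ) := by
    push_cast
    linarith [Nat.le_ceil (K * (k':ℝ))]
  calc w x ≤ K * ((k':ℝ) * fv x) := hwx.trans (mul_le_mul_of_nonneg_left (hk x) hK)
    _ = (K * (k':ℝ)) * fv x := by ring
    _ ≤ ((⌈K * k'⌉₊ + 1 : ℕ) : ℝ) * fv x := mul_le_mul_of_nonneg_right hKk hf0

lemma bot_or_coe {n : ℕ} (a : TR n) : a = ⊥ ∨ ∃ p : TRF n, a = ↑p := by
  induction a using WithBot.recBotCoe with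
  | bot => exact Or.inl rfl
  | coe p => exact Or.inr ⟨p, rfl⟩

/-- Suppose `f` is a tropical rational function whose zero set is
`closure V` (`V ⊆ ℝ^n` nonempty) and `k' * f x ≥ dist(x, closure V)` for all `x` and
some `k' > 0`.  Then (a) every tropical rational `g ≥ 0` vanishing on `closure V`
satisfies `g ≤ N' * f` for some `N' > 0`; and (b) the congruence `E(closure V)` of
pairs agreeing on `closure V` equals the congruence generated by `(f, 0)` (where the
multiplicative identity `one` is the constant function `0`). -/
theorem stmt12 (n : ℕ) (add mul : TR n → TR n → TR n)
    (hadd : AddLaw n add) (hmul : MulLaw n mul)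
    (one : TRF n) (hone : ∀ x, one.1 x = 0)
    (V : Set (EuclideanSpace ℝ (Fin n))) (hV : V.Nonempty)
    (f : TRF n)
    (h1 : {x | f.1 x = 0} = closure V)
    (h2 : ∃ k' : ℕ, 0 < k' ∧ ∀ x, Metric.infDist x (closure V) ≤ (k' : ℝ) * f.1 x) :
    (∀ g : EuclideanSpace ℝ (Fin n) → ℝ, IsTropRat n g → (∀ x, 0 ≤ g x) →
        (∀ x ∈ closure V, g x = 0) →
        ∃ N' : ℕ, 0 < N' ∧ ∀ x, g x ≤ (N' : ℝ) * f.1 x) ∧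
    ((fun a b => ∀ x ∈ closure V, evalTR a x = evalTR b x) =
        conGenBy add mul (fun a b => a = (f : TR n) ∧ b = (one : TR n))) := by
  obtain ⟨k', hk', hk⟩ := h2
  have parta : ∀ g : EuclideanSpace ℝ (Fin n) → ℝ, IsTropRat n g → (∀ x ∈ closure V, g x = 0) →
      ∃ N' : ℕ, 0 < N' ∧ ∀ x, g x ≤ (N' : ℝ) * f.1 x := by
    intro g hg hgV
    obtain ⟨K, hK0, hKlip⟩ := trop_rat_lip hg
    exact keybound V hV f.1 k' hk' hk g K hK0 hKlip hgV
  refine ⟨fun g hg _ hgV => parta g hg hgV, ?_⟩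
  obtain ⟨v0, hv0V⟩ := hV
  have hv0 : v0 ∈ closure V := subset_closure hv0V
  have hfz : ∀ x ∈ closure V, f.1 x = 0 := fun x hx => (Set.ext_iff.mp h1 x).mpr hx
  funext a b
  apply propext
  constructor
  · -- E ⊆ conGen : the hard direction
    intro hab E' hE' hR
    have hRf : E' ↑f ↑one := hR _ _ ⟨rfl, rfl⟩
    obtain ⟨hrefl, hsymm, htrans, haddc, hmulc⟩ := hE'
    rcases bot_or_coe a with rfl | ⟨p, rfl⟩
    · rcases bot_or_coe b with rfl | ⟨q, rfl⟩
      · exact hrefl ⊥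
      · exfalso; have := hab v0 hv0; simp [evalTR] at this
    · rcases bot_or_coe b with rfl | ⟨q, rfl⟩
      · exfalso; have := hab v0 hv0; simp [evalTR] at this
      · -- both nonzero, agreeing on closure V
        have hpq : ∀ x ∈ closure V, p.1 x = q.1 x := by
          intro x hx
          have := hab x hx
          simpa [evalTR] using this
        -- powers of f are congruent to one
        have powf : ∀ N : ℕ, ∃ pN : TRF n, (∀ x, pN.1 x = (N:ℝ) * f.1 x) ∧ E' ↑pN ↑one := by
          intro N
          induction N with
          | zero => exact ⟨one, fun x => by rw [hone]; simp, hrefl _⟩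
          | succ N ih =>
            obtain ⟨pN, hpN, hEpN⟩ := ih
            obtain ⟨h, hh, hhx⟩ := hmul.1 f pN
            refine ⟨h, fun x => by rw [hhx, hpN]; push_cast; ring, ?_⟩
            have h5 := hmulc _ _ _ _ hRf (hrefl (↑pN : TR n))
            obtain ⟨h', hh', hhx'⟩ := hmul.1 one pN
            have hh'eq : h' = pN := Subtype.ext (funext fun x => by rw [hhx', hone]; ring)
            rw [hh, hh', hh'eq] at h5
            exact htrans _ _ _ h5 hEpN
        -- key step: if p ≤ q ≤ N·f + p then E' p q
        have step : ∀ (p q : TRF n) (N : ℕ), (∀ x, p.1 x ≤ q.1 x) →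
            (∀ x, q.1 x ≤ (N:ℝ) * f.1 x + p.1 x) → E' ↑p ↑q := by
          intro p q N hle hbd
          obtain ⟨pN, hpN, hEpN⟩ := powf N
          obtain ⟨r, hr, hrx⟩ := hmul.1 pN p
          have hEr : E' ↑r ↑p := by
            have h5 := hmulc _ _ _ _ hEpN (hrefl (↑p : TR n))
            obtain ⟨r', hr', hrx'⟩ := hmul.1 one p
            have : r' = p := Subtype.ext (funext fun x => by rw [hrx', hone]; ring)
            rw [hr, hr', this] at h5
            exact h5
          have h6 := haddc _ _ _ _ hEr (hrefl (↑q : TR n))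
          obtain ⟨s, hs, hsx⟩ := hadd.1 r q
          obtain ⟨t, ht, htx⟩ := hadd.1 p q
          have hseq : s = r := Subtype.ext (funext fun x => by
            rw [hsx, hrx, hpN]
            exact max_eq_left (by linarith [hbd x]))
          have hteq : t = q := Subtype.ext (funext fun x => by
            rw [htx]
            exact max_eq_right (hle x))
          rw [hs, ht, hseq, hteq] at h6
          exact htrans _ _ _ (hsymm _ _ hEr) h6
        -- apply with m = max(p,q)
        obtain ⟨m, hm, hmx⟩ := hadd.1 p q
        have hmlip : ∃ K : ℝ, 0 ≤ K ∧ ∀ x y,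
            m.1 x - p.1 x ≤ (m.1 y - p.1 y) + K * dist x y := by
          obtain ⟨K₁, hK₁0, hK₁⟩ := trop_rat_lip m.2
          obtain ⟨K₂, hK₂0, hK₂⟩ := trop_rat_lip p.2
          refine ⟨K₁ + K₂, by linarith, fun x y => ?_⟩
          have e1 := hK₁ x y
          have e2 := hK₂ y x
          rw [dist_comm y x] at e2
          linarith
        have hbound : ∃ N : ℕ, 0 < N ∧ ∀ x, m.1 x - p.1 x ≤ (N:ℝ) * f.1 x := by
          obtain ⟨K, hK0, hKlip⟩ := hmlip
          refine keybound V ⟨v0, hv0V⟩ f.1 k' hk' hk _ K hK0 hKlip ?_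
          intro x hx
          rw [hmx, ← hpq x hx, max_self]
          ring
        have hbound2 : ∃ N : ℕ, 0 < N ∧ ∀ x, m.1 x - q.1 x ≤ (N:ℝ) * f.1 x := by
          obtain ⟨K₁, hK₁0, hK₁⟩ := trop_rat_lip m.2
          obtain ⟨K₂, hK₂0, hK₂⟩ := trop_rat_lip q.2
          refine keybound V ⟨v0, hv0V⟩ f.1 k' hk' hk _ (K₁ + K₂) (by linarith) ?_ ?_
          · intro x y
            have e1 := hK₁ x y
            have e2 := hK₂ y x
            rw [dist_comm y x] at e2
            linarith
          · intro x hx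
            rw [hmx, hpq x hx, max_self]
            ring
        obtain ⟨N₁, _, hN₁⟩ := hbound
        obtain ⟨N₂, _, hN₂⟩ := hbound2
        have hpm : E' ↑p ↑m := by
          refine step p m N₁ (fun x => by rw [hmx]; exact le_max_left _ _) fun x => ?_
          linarith [hN₁ x]
        have hqm : E' ↑q ↑m := by
          refine step q m N₂ (fun x => by rw [hmx]; exact le_max_right _ _) fun x => ?_
          linarith [hN₂ x]
        exact htrans _ _ _ hpm (hsymm _ _ hqm)
  · -- conGen ⊆ E : instantiate the universal property
    intro hgen
    apply hgen (fun a b => ∀ x ∈ closure V, evalTR a x = evalTR b x)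
    · refine ⟨fun a x _ => rfl, fun a b h x hx => (h x hx).symm,
        fun a b c hab hbc x hx => (hab x hx).trans (hbc x hx), ?_, ?_⟩
      · rintro a b c d hab hcd
        rcases bot_or_coe a with rfl | ⟨p, rfl⟩
        · have hb : b = ⊥ := by
            rcases bot_or_coe b with rfl | ⟨q, rfl⟩
            · rfl
            · exfalso; have := hab v0 hv0; simp [evalTR] at this
          subst hb
          rw [hadd.2.2, hadd.2.2]
          exact hcd
        · obtain ⟨q, rfl⟩ : ∃ q : TRF n, b = ↑q := by
            rcases bot_or_coe b with rfl | hq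
            · exfalso; have := hab v0 hv0; simp [evalTR] at this
            · exact hq
          rcases bot_or_coe c with rfl | ⟨r, rfl⟩
          · have hd : d = ⊥ := by
              rcases bot_or_coe d with rfl | ⟨s, rfl⟩
              · rfl
              · exfalso; have := hcd v0 hv0; simp [evalTR] at this
            subst hd
            rw [hadd.2.1, hadd.2.1]
            exact hab
          · obtain ⟨s, rfl⟩ : ∃ s : TRF n, d = ↑s := by
              rcases bot_or_coe d with rfl | hs
              · exfalso; have := hcd v0 hv0; simp [evalTR] at this
              · exact hs
            obtain ⟨h₁, he₁, hx₁⟩ := hadd.1 p r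
            obtain ⟨h₂, he₂, hx₂⟩ := hadd.1 q s
            rw [he₁, he₂]
            intro x hx
            have h3 := hab x hx
            have h4 := hcd x hx
            simp only [evalTR, WithBot.map_coe, WithBot.coe_inj] at h3 h4 ⊢
            rw [hx₁, hx₂, h3, h4]
      · rintro a b c d hab hcd
        rcases bot_or_coe a with rfl | ⟨p, rfl⟩
        · have hb : b = ⊥ := by
            rcases bot_or_coe b with rfl | ⟨q, rfl⟩
            · rfl
            · exfalso; have := hab v0 hv0; simp [evalTR] at this
          subst hb
          rw [hmul.2.2, hmul.2.2]
          exact fun x _ => rfl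
        · obtain ⟨q, rfl⟩ : ∃ q : TRF n, b = ↑q := by
            rcases bot_or_coe b with rfl | hq
            · exfalso; have := hab v0 hv0; simp [evalTR] at this
            · exact hq
          rcases bot_or_coe c with rfl | ⟨r, rfl⟩
          · have hd : d = ⊥ := by
              rcases bot_or_coe d with rfl | ⟨s, rfl⟩
              · rfl
              · exfalso; have := hcd v0 hv0; simp [evalTR] at this
            subst hd
            rw [hmul.2.1, hmul.2.1]
            exact fun x _ => rfl
          · obtain ⟨s, rfl⟩ : ∃ s : TRF n, d = ↑s := by
              rcases bot_or_coe d with rfl | hs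
              · exfalso; have := hcd v0 hv0; simp [evalTR] at this
              · exact hs
            obtain ⟨h₁, he₁, hx₁⟩ := hmul.1 p r
            obtain ⟨h₂, he₂, hx₂⟩ := hmul.1 q s
            rw [he₁, he₂]
            intro x hx
            have h3 := hab x hx
            have h4 := hcd x hx
            simp only [evalTR, WithBot.map_coe, WithBot.coe_inj] at h3 h4 ⊢
            rw [hx₁, hx₂, h3, h4]
    · rintro x y ⟨rfl, rfl⟩
      intro z hz
      simp only [evalTR, WithBot.map_coe, WithBot.coe_inj]
      rw [hfz z hz, hone]
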